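/- For any real positive semidefinite p×p matrix S and any ρ > 0, the graphical lasso objective G(Θ) = log det Θ − tr(SΘ) − ρ Σ_{i,j} |Θ_{ij}| is bounded above on the set of positive definite matrices Θ. -/

import Mathlib

open Matrix

theorem glasso_bdd_above (p : ℕ) (S : Matrix (Fin p) (Fin p) ℝ)
    (hS : S.PosSemidef) (ρ : ℝ) (hρ : 0 < ρ) :
    ∃ M : ℝ, ∀ Θ : Matrix (Fin p) (Fin p) ℝ, Θ.PosDef →
      Real.log Θ.det - (S * Θ).trace - ρ * ∑ i, ∑ j, |Θ i j| ≤ M := by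
  refine ⟨p * (-Real.log ρ - 1), fun Θ hΘ => ?_⟩
  have hH := hΘ.isHermitian
  -- trace of S * Θ is nonnegative
  open scoped MatrixOrder in
  have hQpsd : (CFC.sqrt Θ).PosSemidef := (CFC.sqrt_nonneg Θ).posSemidef
  open scoped MatrixOrder in
  set Q := CFC.sqrt Θ with hQ
  have hQH : Qᴴ = Q := hQpsd.1
  open scoped MatrixOrder in
  have htr_eq : (S * Θ).trace = (Q * S * Q).trace := by
    conv_lhs => rw [← CFC.sqrt_mul_sqrt_self Θ hΘ.posSemidef.nonneg]
    rw [← hQ, ← mul_assoc, Matrix.trace_mul_cycle]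
  have hpsd : (Q * S * Q).PosSemidef := by
    have := hS.mul_mul_conjTranspose_same Q
    rwa [hQH] at this
  have htrS : 0 ≤ (S * Θ).trace := by
    rw [htr_eq, Matrix.trace]
    apply Finset.sum_nonneg
    intro i _
    have h := hpsd.diag_nonneg (i := i)
    simpa [dotProduct, Matrix.mulVec, Pi.single_apply, Finset.sum_ite_eq,
      Matrix.diag] using h
  -- trace of Θ equals sum of eigenvalues
  have ht : Θ.trace = ∑ i, hH.eigenvalues i := by
    conv_lhs => rw [hH.spectral_theorem]
    rw [Unitary.conjStarAlgAut_apply, Matrix.trace_mul_cycle, Unitary.coe_star_mul_self, one_mul]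
    simp [Matrix.trace_diagonal]
  -- det equals product of eigenvalues
  have hd : Θ.det = ∏ i, hH.eigenvalues i := by
    simpa using hH.det_eq_prod_eigenvalues
  have hev : ∀ i, 0 < hH.eigenvalues i := hΘ.eigenvalues_pos
  -- log det ≤ ρ * trace + p * (-log ρ - 1)
  have hlog : Real.log Θ.det ≤ ρ * Θ.trace + p * (-Real.log ρ - 1) := by
    rw [hd, Real.log_prod (fun i _ => (hev i).ne'), ht, Finset.mul_sum]
    have : ∀ i ∈ Finset.univ, Real.log (hH.eigenvalues i)
        ≤ ρ * hH.eigenvalues i + (-Real.log ρ - 1) := by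
      intro i _
      have hpos : 0 < ρ * hH.eigenvalues i := mul_pos hρ (hev i)
      have h1 : Real.log (ρ * hH.eigenvalues i) ≤ ρ * hH.eigenvalues i - 1 :=
        Real.log_le_sub_one_of_pos hpos
      rw [Real.log_mul hρ.ne' (hev i).ne'] at h1
      linarith
    calc ∑ i, Real.log (hH.eigenvalues i)
        ≤ ∑ i, (ρ * hH.eigenvalues i + (-Real.log ρ - 1)) := Finset.sum_le_sum this
      _ = ∑ i, ρ * hH.eigenvalues i + p * (-Real.log ρ - 1) := by
          rw [Finset.sum_add_distrib, Finset.sum_const, Finset.card_univ, Fintype.card_fin,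
            nsmul_eq_mul]
      _ = _ := by ring_nf
  -- ρ * trace ≤ ρ * sum of abs
  have htrace_le : Θ.trace ≤ ∑ i, ∑ j, |Θ i j| := by
    rw [Matrix.trace]
    apply Finset.sum_le_sum
    intro i _
    calc Θ.diag i ≤ |Θ i i| := le_abs_self _
      _ ≤ ∑ j, |Θ i j| := Finset.single_le_sum (f := fun j => |Θ i j|) (fun j _ => abs_nonneg _) (Finset.mem_univ i)
  have h2 : ρ * Θ.trace ≤ ρ * ∑ i, ∑ j, |Θ i j| :=
    mul_le_mul_of_nonneg_left htrace_le hρ.le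
  linarith
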